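/- arXiv:1912.01395 — 3 statements merged into one kernel-verified Lean document; each statement's English description precedes it below -/
import Mathlib

section
/- Let j ≥ 0 and 0 ≤ k ≤ 2^j − 1 be integers, set i = 2^j + k + 1, and let v ≥ 1 be an integer. Then for every x ∈ ℝ, the integral P_{v,i}(x) = (1/(v−1)!) ∫₀ˣ (x − t)^{v−1} h_i(t) dt is given piecewise by: P_{v,i}(x) = 0 for x < η₁(i); P_{v,i}(x) = (1/v!)(x − η₁(i))^v for η₁(i) ≤ x ≤ η₂(i); P_{v,i}(x) = (1/v!)[(x − η₁(i))^v − 2(x − η₂(i))^v] for η₂(i) ≤ x ≤ η₃(i); and P_{v,i}(x) = (1/v!)[(x − η₁(i))^v − 2(x − η₂(i))^v + (x − η₃(i))^v] for x > η₃(i). -/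
open MeasureTheory Real

/-- Left endpoint of the support of the Haar wavelet indexed by `(j, k)`. -/
noncomputable def eta1 (j k : ℕ) : ℝ := (k : ℝ) / 2 ^ j

/-- Midpoint of the support of the Haar wavelet indexed by `(j, k)`. -/
noncomputable def eta2 (j k : ℕ) : ℝ := (2 * (k : ℝ) + 1) / 2 ^ (j + 1)

/-- Right endpoint of the support of the Haar wavelet indexed by `(j, k)`. -/
noncomputable def eta3 (j k : ℕ) : ℝ := ((k : ℝ) + 1) / 2 ^ j

/-- The Haar wavelet `h_i` with `i = 2^j + k + 1`: equals `1` on `[η₁, η₂)`,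
`-1` on `[η₂, η₃)` and `0` elsewhere. -/
noncomputable def haarJK (j k : ℕ) (t : ℝ) : ℝ :=
  if eta1 j k ≤ t ∧ t < eta2 j k then 1
  else if eta2 j k ≤ t ∧ t < eta3 j k then -1
  else 0

/-- `p_{2,i}(t) = ∫₀ᵗ (t - s) h_i(s) ds` where `i = 2^j + k + 1`. -/
noncomputable def p2JK (j k : ℕ) (t : ℝ) : ℝ := ∫ s in (0:ℝ)..t, (t - s) * haarJK j k s

/-- `P_{v,i}(x) = (1/(v-1)!) ∫₀ˣ (x-t)^{v-1} h_i(t) dt` where `i = 2^j + k + 1`. -/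
noncomputable def PvJK (v j k : ℕ) (x : ℝ) : ℝ :=
  ((Nat.factorial (v - 1) : ℝ))⁻¹ * ∫ t in (0:ℝ)..x, (x - t) ^ (v - 1) * haarJK j k t

lemma eta1_nonneg (j k : ℕ) : 0 ≤ eta1 j k := by unfold eta1; positivity

lemma eta1_lt_eta2 (j k : ℕ) : eta1 j k < eta2 j k := by
  unfold eta1 eta2
  rw [pow_succ, div_lt_div_iff₀ (by positivity) (by positivity)]
  have : (0:ℝ) < 2 ^ j := by positivity
  nlinarith

lemma eta2_lt_eta3 (j k : ℕ) : eta2 j k < eta3 j k := by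
  unfold eta2 eta3
  rw [pow_succ, div_lt_div_iff₀ (by positivity) (by positivity)]
  have : (0:ℝ) < 2 ^ j := by positivity
  nlinarith

lemma haar_measurable (j k : ℕ) : Measurable (haarJK j k) := by
  unfold haarJK
  exact Measurable.ite measurableSet_Ico measurable_const
    (Measurable.ite measurableSet_Ico measurable_const measurable_const)

lemma haar_abs_le (j k : ℕ) (t : ℝ) : |haarJK j k t| ≤ 1 := by
  unfold haarJK; split_ifs <;> norm_num

lemma haar_intervalIntegrable (j k : ℕ) {g : ℝ → ℝ} (hg : Continuous g) (a b : ℝ) :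
    IntervalIntegrable (fun t => g t * haarJK j k t) volume a b := by
  apply IntervalIntegrable.mono_fun (hg.intervalIntegrable a b)
  · exact ((hg.measurable.mul (haar_measurable j k)).aestronglyMeasurable).restrict
  · filter_upwards with t
    simp only [Real.norm_eq_abs, abs_mul]
    nlinarith [haar_abs_le j k t, abs_nonneg (g t), abs_nonneg (haarJK j k t)]

lemma int_xt_pow (x a b : ℝ) (n : ℕ) :
    ∫ t in a..b, (x - t) ^ n = ((x - a) ^ (n + 1) - (x - b) ^ (n + 1)) / (n + 1) := by
  have h := intervalIntegral.integral_comp_sub_left (a := a) (b := b) (fun t => t ^ n) x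
  rw [h, integral_pow]

lemma ae_not_mem_etas (j k : ℕ) :
    ∀ᵐ t : ℝ, t ∉ ({eta1 j k, eta2 j k, eta3 j k} : Set ℝ) := by
  have : volume ({eta1 j k, eta2 j k, eta3 j k} : Set ℝ) = 0 :=
    (Set.toFinite _).measure_zero volume
  exact measure_eq_zero_iff_ae_notMem.mp this

lemma piece_neg (j k : ℕ) (n : ℕ) (x : ℝ) (hx : x < eta1 j k) :
    ∫ t in (0:ℝ)..x, (x - t) ^ n * haarJK j k t = 0 := by
  rw [intervalIntegral.integral_congr_ae (g := fun _ => (0:ℝ))]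
  · simp
  · filter_upwards [ae_not_mem_etas j k] with t ht hmem
    have h1 : t ≤ max 0 x := (Set.mem_uIoc.mp hmem).elim (fun h => le_max_of_le_right h.2)
      (fun h => le_max_of_le_left h.2)
    have h2 : t < eta1 j k := by
      rcases lt_or_eq_of_le (h1.trans (max_le (eta1_nonneg j k) hx.le)) with h | h
      · exact h
      · exact absurd (by simp [h]) ht
    have h3 : t < eta2 j k := h2.trans (eta1_lt_eta2 j k)
    simp only [haarJK, mul_eq_zero]
    rw [if_neg (by push_neg; intro h; exact absurd h (not_le.mpr h2)),
      if_neg (by push_neg; intro h; exact absurd h (not_le.mpr (h3.trans_le' (le_refl t))))]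
    · simp
    
lemma piece0 (j k : ℕ) (n : ℕ) (x : ℝ) :
    ∫ t in (0:ℝ)..eta1 j k, (x - t) ^ n * haarJK j k t = 0 := by
  rw [intervalIntegral.integral_congr_ae (g := fun _ => (0:ℝ))]
  · simp
  · filter_upwards [ae_not_mem_etas j k] with t ht hmem
    rw [Set.uIoc_of_le (eta1_nonneg j k)] at hmem
    have h2 : t < eta1 j k := lt_of_le_of_ne hmem.2 (by intro h; exact ht (by simp [h]))
    have h3 : t < eta2 j k := h2.trans (eta1_lt_eta2 j k)
    simp only [haarJK]
    rw [if_neg (by push_neg; intro h; exact absurd h (not_le.mpr h2)),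
      if_neg (by push_neg; intro h; linarith)]
    simp

lemma piece1 (j k : ℕ) (n : ℕ) (x c : ℝ) (hc1 : eta1 j k ≤ c) (hc2 : c ≤ eta2 j k) :
    ∫ t in eta1 j k..c, (x - t) ^ n * haarJK j k t
      = ((x - eta1 j k) ^ (n + 1) - (x - c) ^ (n + 1)) / (n + 1) := by
  rw [intervalIntegral.integral_congr_ae (g := fun t => (x - t) ^ n)]
  · exact int_xt_pow x _ c n
  · filter_upwards [ae_not_mem_etas j k] with t ht hmem
    rw [Set.uIoc_of_le hc1] at hmem
    have h1 : eta1 j k ≤ t := hmem.1.le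
    have h2 : t < eta2 j k := lt_of_le_of_ne (hmem.2.trans hc2)
      (by intro h; exact ht (by simp [h]))
    simp only [haarJK]
    rw [if_pos ⟨h1, h2⟩, mul_one]

lemma piece2 (j k : ℕ) (n : ℕ) (x c : ℝ) (hc1 : eta2 j k ≤ c) (hc2 : c ≤ eta3 j k) :
    ∫ t in eta2 j k..c, (x - t) ^ n * haarJK j k t
      = -(((x - eta2 j k) ^ (n + 1) - (x - c) ^ (n + 1)) / (n + 1)) := by
  rw [intervalIntegral.integral_congr_ae (g := fun t => -((x - t) ^ n))]
  · rw [intervalIntegral.integral_neg, int_xt_pow x _ c n]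
  · filter_upwards [ae_not_mem_etas j k] with t ht hmem
    rw [Set.uIoc_of_le hc1] at hmem
    have h1 : eta2 j k < t := hmem.1
    have h2 : t < eta3 j k := lt_of_le_of_ne (hmem.2.trans hc2)
      (by intro h; exact ht (by simp [h]))
    simp only [haarJK]
    rw [if_neg (by push_neg; intro _; linarith), if_pos ⟨h1.le, h2⟩]
    ring

lemma piece3 (j k : ℕ) (n : ℕ) (x c : ℝ) (hc1 : eta3 j k ≤ c) :
    ∫ t in eta3 j k..c, (x - t) ^ n * haarJK j k t = 0 := by
  rw [intervalIntegral.integral_congr_ae (g := fun _ => (0:ℝ))]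
  · simp
  · filter_upwards [ae_not_mem_etas j k] with t ht hmem
    rw [Set.uIoc_of_le hc1] at hmem
    have h1 : eta3 j k < t := hmem.1
    have h2 : eta2 j k < t := (eta2_lt_eta3 j k).trans h1
    simp only [haarJK]
    rw [if_neg (by push_neg; intro _; linarith), if_neg (by push_neg; intro _; linarith)]
    simp


/-- the piecewise closed form of `P_{v,i}`. -/
theorem Pv_piecewise (j k v : ℕ) (hk : k ≤ 2 ^ j - 1) (hv : 1 ≤ v) (x : ℝ) :
    (x < eta1 j k → PvJK v j k x = 0) ∧
    (eta1 j k ≤ x → x ≤ eta2 j k →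
      PvJK v j k x = ((Nat.factorial v : ℝ))⁻¹ * (x - eta1 j k) ^ v) ∧
    (eta2 j k ≤ x → x ≤ eta3 j k →
      PvJK v j k x = ((Nat.factorial v : ℝ))⁻¹ *
        ((x - eta1 j k) ^ v - 2 * (x - eta2 j k) ^ v)) ∧
    (eta3 j k < x →
      PvJK v j k x = ((Nat.factorial v : ℝ))⁻¹ *
        ((x - eta1 j k) ^ v - 2 * (x - eta2 j k) ^ v + (x - eta3 j k) ^ v)) := by
  obtain ⟨w, rfl⟩ : ∃ w, v = w + 1 := ⟨v - 1, (Nat.succ_pred_eq_of_pos hv).symm⟩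
  have hw : w + 1 - 1 = w := rfl
  have hfact : (Nat.factorial (w + 1) : ℝ) = (w + 1) * Nat.factorial w := by
    push_cast [Nat.factorial_succ]; ring
  have hfw : (Nat.factorial w : ℝ) ≠ 0 := by positivity
  have hw1 : ((w : ℝ) + 1) ≠ 0 := by positivity
  have hint : ∀ a b : ℝ,
      IntervalIntegrable (fun t => (x - t) ^ w * haarJK j k t) volume a b :=
    fun a b => haar_intervalIntegrable j k (by continuity) a b
  have hP : PvJK (w + 1) j k x
      = ((Nat.factorial w : ℝ))⁻¹ * ∫ t in (0:ℝ)..x, (x - t) ^ w * haarJK j k t := by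
    simp [PvJK, hw]
  refine ⟨fun h1 => ?_, fun h1 h2 => ?_, fun h1 h2 => ?_, fun h1 => ?_⟩
  · rw [hP, piece_neg j k w x h1, mul_zero]
  · rw [hP, ← intervalIntegral.integral_add_adjacent_intervals (hint 0 (eta1 j k))
      (hint (eta1 j k) x), piece0 j k w x, piece1 j k w x x h1 h2, zero_add,
      sub_self, zero_pow (show w+1 ≠ 0 by omega), hfact]
    field_simp
    ring
  · have h12 : eta1 j k ≤ eta2 j k := (eta1_lt_eta2 j k).le
    rw [hP, ← intervalIntegral.integral_add_adjacent_intervals (hint 0 (eta2 j k))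
      (hint (eta2 j k) x),
      ← intervalIntegral.integral_add_adjacent_intervals (hint 0 (eta1 j k))
      (hint (eta1 j k) (eta2 j k)), piece0 j k w x,
      piece1 j k w x (eta2 j k) h12 le_rfl,
      piece2 j k w x x h1 h2, zero_add, sub_self, zero_pow (by omega), hfact]
    field_simp
    ring
  · have h12 : eta1 j k ≤ eta2 j k := (eta1_lt_eta2 j k).le
    have h23 : eta2 j k ≤ eta3 j k := (eta2_lt_eta3 j k).le
    rw [hP, ← intervalIntegral.integral_add_adjacent_intervals (hint 0 (eta3 j k))
      (hint (eta3 j k) x),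
      ← intervalIntegral.integral_add_adjacent_intervals (hint 0 (eta2 j k))
      (hint (eta2 j k) (eta3 j k)),
      ← intervalIntegral.integral_add_adjacent_intervals (hint 0 (eta1 j k))
      (hint (eta1 j k) (eta2 j k)), piece0 j k w x,
      piece1 j k w x (eta2 j k) h12 le_rfl,
      piece2 j k w x (eta3 j k) h23 le_rfl,
      piece3 j k w x x h1.le, hfact]
    field_simp
    ring
end

section
/- (Convergence of the Haar wavelet method for the IVP.) Let y, z : [0,1] → ℝ be three times differentiable with |y'''(t)| ≤ ξ₁ and |z'''(t)| ≤ ξ₂ for all t ∈ [0,1], where ξ₂ ≤ ξ₁ and ξ₁ > 0. Define the Haar coefficients a_{2^j+k+1} = 2^j ∫₀¹ y''(t) h_{2^j+k+1}(t) dt and b_{2^j+k+1} = 2^j ∫₀¹ z''(t) h_{2^j+k+1}(t) dt, and for an integer J ≥ 0 define E_{M1}(t) = Σ_{j=J+1}^∞ Σ_{k=0}^{2^j−1} a_{2^j+k+1} p_{2,2^j+k+1}(t), E_{M2}(t) = Σ_{j=J+1}^∞ Σ_{k=0}^{2^j−1} b_{2^j+k+1} p_{2,2^j+k+1}(t), and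 ‖E_M‖₂ = ‖E_{M1}‖₂ + ‖E_{M2}‖₂. Then for every ε > 0, if J > log₂(√(ξ₁/(3ε))) − 1, then ‖E_M‖₂ < ε. -/
open MeasureTheory Real

/-- The Haar coefficient `2^j ∫₀¹ f(t) h_{2^j+k+1}(t) dt` of a function `f`. -/
noncomputable def haarCoeff (f : ℝ → ℝ) (j k : ℕ) : ℝ :=
  2 ^ j * ∫ t in (0:ℝ)..1, f t * haarJK j k t

/-- Truncation error of the Haar expansion at resolution `J`:
`Σ_{j=J+1}^∞ Σ_{k=0}^{2^j-1} c_{j,k} p_{2,2^j+k+1}(t)` (here the outer sum is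
reindexed by `j = J + 1 + m`). -/
noncomputable def truncErr (c : ℕ → ℕ → ℝ) (J : ℕ) (t : ℝ) : ℝ :=
  ∑' m : ℕ, ∑ k ∈ Finset.range (2 ^ (J + 1 + m)), c (J + 1 + m) k * p2JK (J + 1 + m) k t

/-- The `L²([0,1])` norm of a function. -/
noncomputable def L2norm (f : ℝ → ℝ) : ℝ := Real.sqrt (∫ t in (0:ℝ)..1, f t ^ 2)

namespace HaarAux


noncomputable def dd (j : ℕ) : ℝ := 1 / 2 ^ (j + 1)

lemma dd_pos (j : ℕ) : 0 < dd j := by unfold dd; positivity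

lemma eta2_eq (j k : ℕ) : eta2 j k = eta1 j k + dd j := by
  unfold eta1 eta2 dd; rw [pow_succ]; field_simp

lemma eta3_eq (j k : ℕ) : eta3 j k = eta1 j k + 2 * dd j := by
  unfold eta1 eta3 dd; rw [pow_succ]; field_simp

lemma eta1_nonneg (j k : ℕ) : 0 ≤ eta1 j k := by unfold eta1; positivity

lemma eta2_nonneg (j k : ℕ) : 0 ≤ eta2 j k := by
  rw [eta2_eq]; linarith [eta1_nonneg j k, dd_pos j]

lemma eta1_lt_eta2 (j k : ℕ) : eta1 j k < eta2 j k := by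
  rw [eta2_eq]; linarith [dd_pos j]

lemma eta2_lt_eta3 (j k : ℕ) : eta2 j k < eta3 j k := by
  rw [eta2_eq, eta3_eq]; linarith [dd_pos j]

lemma eta3_le_one (j k : ℕ) (h : k < 2 ^ j) : eta3 j k ≤ 1 := by
  unfold eta3
  rw [div_le_one (by positivity)]
  have : (k : ℝ) + 1 ≤ (2 : ℝ) ^ j := by exact_mod_cast Nat.succ_le_of_lt h
  simpa using this

lemma haar_ae (j k : ℕ) : (fun s => haarJK j k s) =ᵐ[volume]
    (fun s => Set.indicator (Set.Ioc (eta1 j k) (eta2 j k)) (fun _ => (1:ℝ)) s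
      - Set.indicator (Set.Ioc (eta2 j k) (eta3 j k)) (fun _ => (1:ℝ)) s) := by
  have hz : volume ({eta1 j k, eta2 j k, eta3 j k} : Set ℝ) = 0 :=
    Set.Finite.measure_zero (Set.toFinite _) _
  have hmem : ({eta1 j k, eta2 j k, eta3 j k} : Set ℝ)ᶜ ∈ ae volume := by
    rw [MeasureTheory.mem_ae_iff, compl_compl]; exact hz
  filter_upwards [hmem] with s hs
  simp only [Set.mem_compl_iff, Set.mem_insert_iff, Set.mem_singleton_iff, not_or] at hs
  obtain ⟨h1, h2, h3⟩ := hs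
  have hA : (eta1 j k ≤ s ∧ s < eta2 j k) ↔ (eta1 j k < s ∧ s ≤ eta2 j k) :=
    ⟨fun ⟨u, v⟩ => ⟨u.lt_of_ne (Ne.symm h1), v.le⟩,
     fun ⟨u, v⟩ => ⟨u.le, v.lt_of_ne h2⟩⟩
  have hB : (eta2 j k ≤ s ∧ s < eta3 j k) ↔ (eta2 j k < s ∧ s ≤ eta3 j k) :=
    ⟨fun ⟨u, v⟩ => ⟨u.lt_of_ne (Ne.symm h2), v.le⟩,
     fun ⟨u, v⟩ => ⟨u.le, v.lt_of_ne h3⟩⟩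
  simp only [haarJK, Set.indicator_apply, Set.mem_Ioc, ← hA, ← hB]
  split_ifs with u v <;>
    first
      | (obtain ⟨u1, u2⟩ := u; obtain ⟨v1, v2⟩ := v; linarith)
      | norm_num

lemma integral_ind (a b t : ℝ) (ha : 0 ≤ a) (hab : a ≤ b) :
    ∫ s in (0:ℝ)..t, Set.indicator (Set.Ioc a b) (fun s => t - s) s =
      ((t - a) ^ 2 - (t - (a ⊔ (t ⊓ b))) ^ 2) / 2 := by
  rcases le_or_gt 0 t with h0t | h0t
  · rw [intervalIntegral.integral_of_le h0t,
      MeasureTheory.integral_indicator measurableSet_Ioc,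
      MeasureTheory.Measure.restrict_restrict measurableSet_Ioc,
      Set.Ioc_inter_Ioc, sup_eq_left.2 ha]
    rcases le_or_gt a (b ⊓ t) with hle | hlt
    · have h2 : a ⊔ (t ⊓ b) = t ⊓ b := sup_eq_right.2 (by simpa [inf_comm] using hle)
      rw [h2, ← intervalIntegral.integral_of_le hle, inf_comm]
      have : ∫ s in a..(t ⊓ b), (t - s) = (t ⊓ b - a) * t - ((t ⊓ b) ^ 2 - a ^ 2) / 2 := by
        rw [intervalIntegral.integral_sub intervalIntegrable_const
            intervalIntegral.intervalIntegrable_id, intervalIntegral.integral_const, integral_id]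
        simp only [smul_eq_mul]
        try ring
      rw [this]; ring
    · have h2 : a ⊔ (t ⊓ b) = a := sup_eq_left.2 (le_of_lt (by simpa [inf_comm] using hlt))
      rw [Set.Ioc_eq_empty (not_lt.2 hlt.le), h2]
      simp
  · have hta : t ≤ a := h0t.le.trans ha
    have htb : t ≤ b := hta.trans hab
    rw [intervalIntegral.integral_of_ge h0t.le,
      MeasureTheory.integral_indicator measurableSet_Ioc,
      MeasureTheory.Measure.restrict_restrict measurableSet_Ioc,
      Set.Ioc_inter_Ioc, inf_eq_right.2 (ha.trans hab), sup_eq_left.2 hta,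
      Set.Ioc_eq_empty (not_lt.2 ha), inf_eq_left.2 htb, sup_eq_left.2 hta]
    simp

lemma p2_eq (j k : ℕ) (t : ℝ) :
    p2JK j k t =
      ((t - eta1 j k) ^ 2 - (t - (eta1 j k ⊔ (t ⊓ eta2 j k))) ^ 2
        - (t - eta2 j k) ^ 2 + (t - (eta2 j k ⊔ (t ⊓ eta3 j k))) ^ 2) / 2 := by
  have hint : ∀ a b : ℝ,
      IntervalIntegrable (fun s => Set.indicator (Set.Ioc a b) (fun s => t - s) s)
        volume 0 t := by
    intro a b
    rw [intervalIntegrable_iff]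
    exact (MeasureTheory.integrable_indicator_iff measurableSet_Ioc).2
      (Integrable.integrableOn ((continuous_const.sub continuous_id).integrableOn_uIoc))
  have hae : ∀ᵐ s ∂volume, s ∈ Set.uIoc (0:ℝ) t →
      (t - s) * haarJK j k s =
        Set.indicator (Set.Ioc (eta1 j k) (eta2 j k)) (fun s => t - s) s
          - Set.indicator (Set.Ioc (eta2 j k) (eta3 j k)) (fun s => t - s) s := by
    filter_upwards [haar_ae j k] with s hs _
    rw [hs]
    simp only [Set.indicator_apply]
    split_ifs <;> ring
  rw [p2JK, intervalIntegral.integral_congr_ae hae,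
    intervalIntegral.integral_sub (hint _ _) (hint _ _),
    integral_ind _ _ t (eta1_nonneg j k) (eta1_lt_eta2 j k).le,
    integral_ind _ _ t (eta2_nonneg j k) (eta2_lt_eta3 j k).le]
  ring

lemma p2_nonneg (j k : ℕ) (t : ℝ) : 0 ≤ p2JK j k t := by
  rw [p2_eq]
  rcases le_total t (eta1 j k) with h | h
  · rw [inf_eq_left.2 (h.trans (eta1_lt_eta2 j k).le),
      sup_eq_left.2 h, inf_eq_left.2 ((h.trans (eta1_lt_eta2 j k).le).trans (eta2_lt_eta3 j k).le),
      sup_eq_left.2 (h.trans (eta1_lt_eta2 j k).le)]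
    nlinarith [sq_nonneg (t - eta1 j k)]
  · rcases le_total t (eta2 j k) with h2 | h2
    · rw [inf_eq_left.2 h2, sup_eq_right.2 h,
        inf_eq_left.2 (h2.trans (eta2_lt_eta3 j k).le), sup_eq_left.2 h2]
      nlinarith
    · rcases le_total t (eta3 j k) with h3 | h3
      · rw [inf_eq_right.2 h2, sup_eq_right.2 (eta1_lt_eta2 j k).le,
          inf_eq_left.2 h3, sup_eq_right.2 h2]
        have e2 := eta2_eq j k; have e3 := eta3_eq j k
        nlinarith [dd_pos j]
      · rw [inf_eq_right.2 h2, sup_eq_right.2 (eta1_lt_eta2 j k).le,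
          inf_eq_right.2 h3, sup_eq_right.2 (eta2_lt_eta3 j k).le]
        have e2 := eta2_eq j k; have e3 := eta3_eq j k
        nlinarith [dd_pos j]

lemma p2_le (j k : ℕ) (t : ℝ) : p2JK j k t ≤ dd j ^ 2 := by
  rw [p2_eq]
  have e2 := eta2_eq j k; have e3 := eta3_eq j k; have hd := dd_pos j
  rcases le_total t (eta1 j k) with h | h
  · rw [inf_eq_left.2 (h.trans (eta1_lt_eta2 j k).le),
      sup_eq_left.2 h, inf_eq_left.2 ((h.trans (eta1_lt_eta2 j k).le).trans (eta2_lt_eta3 j k).le),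
      sup_eq_left.2 (h.trans (eta1_lt_eta2 j k).le)]
    nlinarith
  · rcases le_total t (eta2 j k) with h2 | h2
    · rw [inf_eq_left.2 h2, sup_eq_right.2 h,
        inf_eq_left.2 (h2.trans (eta2_lt_eta3 j k).le), sup_eq_left.2 h2]
      nlinarith
    · rcases le_total t (eta3 j k) with h3 | h3
      · rw [inf_eq_right.2 h2, sup_eq_right.2 (eta1_lt_eta2 j k).le,
          inf_eq_left.2 h3, sup_eq_right.2 h2]
        nlinarith
      · rw [inf_eq_right.2 h2, sup_eq_right.2 (eta1_lt_eta2 j k).le,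
          inf_eq_right.2 h3, sup_eq_right.2 (eta2_lt_eta3 j k).le]
        nlinarith

lemma p2_continuous (j k : ℕ) : Continuous (p2JK j k) := by
  have : p2JK j k = fun t =>
      ((t - eta1 j k) ^ 2 - (t - (eta1 j k ⊔ (t ⊓ eta2 j k))) ^ 2
        - (t - eta2 j k) ^ 2 + (t - (eta2 j k ⊔ (t ⊓ eta3 j k))) ^ 2) / 2 :=
    funext (p2_eq j k)
  rw [this]
  fun_prop


lemma integral_haar_mul (g : ℝ → ℝ) (hg : Continuous g) (j k : ℕ) (hk : k < 2 ^ j) :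
    ∫ t in (0:ℝ)..1, g t * haarJK j k t =
      (∫ t in eta1 j k..eta2 j k, g t) - ∫ t in eta2 j k..eta3 j k, g t := by
  have key : ∀ a b : ℝ, 0 ≤ a → a ≤ b → b ≤ 1 →
      (∫ s in (0:ℝ)..1, Set.indicator (Set.Ioc a b) g s) = ∫ s in a..b, g s := by
    intro a b ha hab hb1
    rw [intervalIntegral.integral_of_le zero_le_one,
      MeasureTheory.integral_indicator measurableSet_Ioc,
      MeasureTheory.Measure.restrict_restrict measurableSet_Ioc,
      Set.Ioc_inter_Ioc, sup_eq_left.2 ha, inf_eq_left.2 hb1,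
      ← intervalIntegral.integral_of_le hab]
  have hint : ∀ a b : ℝ,
      IntervalIntegrable (fun s => Set.indicator (Set.Ioc a b) g s) volume 0 1 := by
    intro a b
    rw [intervalIntegrable_iff]
    exact (MeasureTheory.integrable_indicator_iff measurableSet_Ioc).2
      (Integrable.integrableOn (hg.integrableOn_uIoc))
  have hae : ∀ᵐ s ∂volume, s ∈ Set.uIoc (0:ℝ) 1 →
      g s * haarJK j k s =
        Set.indicator (Set.Ioc (eta1 j k) (eta2 j k)) g s
          - Set.indicator (Set.Ioc (eta2 j k) (eta3 j k)) g s := by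
    filter_upwards [haar_ae j k] with s hs _
    rw [hs]
    simp only [Set.indicator_apply]
    split_ifs <;> ring
  rw [intervalIntegral.integral_congr_ae hae,
    intervalIntegral.integral_sub (hint _ _) (hint _ _),
    key _ _ (eta1_nonneg j k) (eta1_lt_eta2 j k).le
      ((eta2_lt_eta3 j k).le.trans (eta3_le_one j k hk)),
    key _ _ (eta2_nonneg j k) (eta2_lt_eta3 j k).le (eta3_le_one j k hk)]

lemma coeff_bound (f : ℝ → ℝ) (ξ : ℝ)
    (hf : Differentiable ℝ f) (hf' : Differentiable ℝ (deriv f))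
    (hb : ∀ x ∈ Set.Icc (0:ℝ) 1, |deriv (deriv f) x| ≤ ξ)
    (j k : ℕ) (hk : k < 2 ^ j) :
    |haarCoeff (deriv f) j k| ≤ 2 ^ j * ξ * dd j ^ 2 := by
  have hcont : Continuous (deriv f) := hf'.continuous
  have hd := dd_pos j
  have he2 := eta2_eq j k
  have he3 := eta3_eq j k
  have he1n := eta1_nonneg j k
  have he31 := eta3_le_one j k hk
  have hftc : ∀ a b : ℝ, (∫ t in a..b, deriv f t) = f b - f a := fun a b =>
    intervalIntegral.integral_deriv_eq_sub (fun x _ => hf x)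
      (hcont.intervalIntegrable _ _)
  have hstep : haarCoeff (deriv f) j k
      = 2 ^ j * ((f (eta2 j k) - f (eta1 j k)) - (f (eta3 j k) - f (eta2 j k))) := by
    rw [haarCoeff, integral_haar_mul (deriv f) hcont j k hk, hftc, hftc]
  -- the difference as an integral
  have hG : ∀ x : ℝ, HasDerivAt (fun x => f (x + dd j) - f x)
      (deriv f (x + dd j) - deriv f x) x := fun x =>
    ((hf (x + dd j)).hasDerivAt.comp_add_const x (dd j)).sub (hf x).hasDerivAt
  have hGint : IntervalIntegrable (fun x => deriv f (x + dd j) - deriv f x) volume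
      (eta1 j k) (eta2 j k) :=
    ((hcont.comp (continuous_add_right (dd j))).sub hcont).intervalIntegrable _ _
  have hint2 : ∫ x in eta1 j k..eta2 j k, (deriv f (x + dd j) - deriv f x)
      = (f (eta2 j k + dd j) - f (eta2 j k)) - (f (eta1 j k + dd j) - f (eta1 j k)) :=
    intervalIntegral.integral_eq_sub_of_hasDerivAt (fun x _ => hG x) hGint
  have hboundInner : ∀ x ∈ Set.uIoc (eta1 j k) (eta2 j k),
      ‖deriv f (x + dd j) - deriv f x‖ ≤ ξ * dd j := by
    intro x hx
    rw [Set.uIoc_of_le (eta1_lt_eta2 j k).le, Set.mem_Ioc] at hx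
    obtain ⟨c, hc, hceq⟩ := exists_hasDerivAt_eq_slope (deriv f) (deriv (deriv f))
      (by linarith : x < x + dd j) hcont.continuousOn (fun u _ => (hf' u).hasDerivAt)
    have hcmem : c ∈ Set.Icc (0:ℝ) 1 := by
      constructor
      · linarith [hc.1]
      · nlinarith [hc.2, hx.2]
    have : deriv f (x + dd j) - deriv f x = deriv (deriv f) c * dd j := by
      rw [hceq, show x + dd j - x = dd j by ring, div_mul_cancel₀ _ hd.ne']
    rw [this, Real.norm_eq_abs, abs_mul, abs_of_pos hd]
    exact mul_le_mul_of_nonneg_right (hb c hcmem) hd.le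
  have habs : |∫ x in eta1 j k..eta2 j k, (deriv f (x + dd j) - deriv f x)|
      ≤ ξ * dd j * |eta2 j k - eta1 j k| :=
    intervalIntegral.norm_integral_le_of_norm_le_const hboundInner
  rw [hstep, abs_mul]
  have h2j : |(2:ℝ) ^ j| = 2 ^ j := abs_of_pos (by positivity)
  rw [h2j]
  have : |(f (eta2 j k) - f (eta1 j k)) - (f (eta3 j k) - f (eta2 j k))| ≤ ξ * dd j ^ 2 := by
    have heq : (f (eta2 j k) - f (eta1 j k)) - (f (eta3 j k) - f (eta2 j k))
        = -((f (eta2 j k + dd j) - f (eta2 j k)) - (f (eta1 j k + dd j) - f (eta1 j k))) := by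
      rw [← he2]; rw [show eta2 j k + dd j = eta3 j k by rw [he2, he3]; ring]
      ring
    rw [heq, abs_neg, ← hint2]
    calc |∫ x in eta1 j k..eta2 j k, (deriv f (x + dd j) - deriv f x)|
        ≤ ξ * dd j * |eta2 j k - eta1 j k| := habs
      _ = ξ * dd j ^ 2 := by
          rw [he2, show eta1 j k + dd j - eta1 j k = dd j by ring, abs_of_pos hd]; ring
  calc (2:ℝ) ^ j * |(f (eta2 j k) - f (eta1 j k)) - (f (eta3 j k) - f (eta2 j k))|
      ≤ 2 ^ j * (ξ * dd j ^ 2) := by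
        exact mul_le_mul_of_nonneg_left this (by positivity)
    _ = 2 ^ j * ξ * dd j ^ 2 := by ring

lemma L2norm_le_of_bound (f : ℝ → ℝ) (C : ℝ) (hC : 0 ≤ C) (hcont : Continuous f)
    (hb : ∀ t ∈ Set.Icc (0:ℝ) 1, |f t| ≤ C) : L2norm f ≤ C := by
  have h1 : (∫ t in (0:ℝ)..1, f t ^ 2) ≤ ∫ t in (0:ℝ)..1, C ^ 2 := by
    apply intervalIntegral.integral_mono_on zero_le_one
      ((hcont.pow 2).intervalIntegrable _ _) (intervalIntegrable_const)
    intro x hx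
    have := hb x hx
    show f x ^ 2 ≤ C ^ 2
    nlinarith [abs_nonneg (f x), sq_abs (f x)]
  have h2 : (∫ t in (0:ℝ)..1, C ^ 2) = C ^ 2 := by simp
  rw [L2norm]
  calc Real.sqrt (∫ t in (0:ℝ)..1, f t ^ 2) ≤ Real.sqrt (C ^ 2) := by
        apply Real.sqrt_le_sqrt; rw [h2] at h1; exact h1
    _ = C := Real.sqrt_sq hC

lemma term_bound (f : ℝ → ℝ) (ξ : ℝ) (hξ : 0 ≤ ξ)
    (hf : Differentiable ℝ f) (hf' : Differentiable ℝ (deriv f))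
    (hb : ∀ x ∈ Set.Icc (0:ℝ) 1, |deriv (deriv f) x| ≤ ξ)
    (j : ℕ) (t : ℝ) :
    |∑ k ∈ Finset.range (2 ^ j), haarCoeff (deriv f) j k * p2JK j k t|
      ≤ ξ / 16 * (1 / 4) ^ j := by
  have hper : ∀ k ∈ Finset.range (2 ^ j),
      |haarCoeff (deriv f) j k * p2JK j k t| ≤ (2 ^ j * ξ * dd j ^ 2) * dd j ^ 2 := by
    intro k hk
    rw [abs_mul]
    have h1 := coeff_bound f ξ hf hf' hb j k (Finset.mem_range.1 hk)
    have h2 : |p2JK j k t| ≤ dd j ^ 2 := by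
      rw [abs_of_nonneg (p2_nonneg j k t)]; exact p2_le j k t
    exact mul_le_mul h1 h2 (abs_nonneg _) (by positivity)
  calc |∑ k ∈ Finset.range (2 ^ j), haarCoeff (deriv f) j k * p2JK j k t|
      ≤ ∑ k ∈ Finset.range (2 ^ j), |haarCoeff (deriv f) j k * p2JK j k t| :=
        Finset.abs_sum_le_sum_abs _ _
    _ ≤ ∑ _k ∈ Finset.range (2 ^ j), (2 ^ j * ξ * dd j ^ 2) * dd j ^ 2 :=
        Finset.sum_le_sum hper
    _ = 2 ^ j * ((2 ^ j * ξ * dd j ^ 2) * dd j ^ 2) := by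
        rw [Finset.sum_const, Finset.card_range]; push_cast; ring
    _ = ξ / 16 * (1 / 4) ^ j := by
        unfold dd
        simp only [div_pow, one_pow, ← pow_mul]
        have h2 : ((2:ℝ) ^ ((j + 1) * 2)) = 4 * (2 ^ j * 2 ^ j) := by
          rw [show (j+1)*2 = j + j + 2 by ring, pow_add, pow_add]; norm_num; ring
        have h4 : ((4:ℝ) ^ j) = 2 ^ j * 2 ^ j := by rw [← mul_pow]; norm_num
        have hne : ((2:ℝ) ^ j) ≠ 0 := by positivity
        rw [h2, h4]
        field_simp
        ring


lemma usum (ξ : ℝ) (J : ℕ) :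
    Summable (fun m : ℕ => ξ / 16 * (1 / 4 : ℝ) ^ (J + 1 + m)) := by
  have he : (fun m : ℕ => ξ / 16 * (1 / 4 : ℝ) ^ (J + 1 + m))
      = fun m : ℕ => (ξ / 16 * (1 / 4 : ℝ) ^ (J + 1)) * (1 / 4 : ℝ) ^ m := by
    funext m; rw [pow_add]; ring
  rw [he]
  exact (summable_geometric_of_lt_one (by norm_num) (by norm_num)).mul_left _

lemma utsum (ξ : ℝ) (J : ℕ) :
    ∑' m : ℕ, ξ / 16 * (1 / 4 : ℝ) ^ (J + 1 + m) = ξ / 12 * (1 / 4) ^ (J + 1) := by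
  have he : (fun m : ℕ => ξ / 16 * (1 / 4 : ℝ) ^ (J + 1 + m))
      = fun m : ℕ => (ξ / 16 * (1 / 4 : ℝ) ^ (J + 1)) * (1 / 4 : ℝ) ^ m := by
    funext m; rw [pow_add]; ring
  rw [he, tsum_mul_left, tsum_geometric_of_lt_one (by norm_num) (by norm_num)]
  norm_num
  ring

lemma trunc_pointwise (f : ℝ → ℝ) (ξ : ℝ) (hξ : 0 ≤ ξ)
    (hf : Differentiable ℝ f) (hf' : Differentiable ℝ (deriv f))
    (hb : ∀ x ∈ Set.Icc (0:ℝ) 1, |deriv (deriv f) x| ≤ ξ) (J : ℕ) (t : ℝ) :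
    |truncErr (haarCoeff (deriv f)) J t| ≤ ξ / 12 * (1 / 4) ^ (J + 1) := by
  rw [truncErr, ← Real.norm_eq_abs, ← utsum ξ J]
  exact tsum_of_norm_bounded (usum ξ J).hasSum
    (fun m => by simpa [Real.norm_eq_abs] using term_bound f ξ hξ hf hf' hb (J + 1 + m) t)

lemma trunc_continuous (f : ℝ → ℝ) (ξ : ℝ) (hξ : 0 ≤ ξ)
    (hf : Differentiable ℝ f) (hf' : Differentiable ℝ (deriv f))
    (hb : ∀ x ∈ Set.Icc (0:ℝ) 1, |deriv (deriv f) x| ≤ ξ) (J : ℕ) :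
    Continuous (truncErr (haarCoeff (deriv f)) J) := by
  apply continuous_tsum
    (fun m => continuous_finset_sum _ fun k _ => continuous_const.mul (p2_continuous _ _))
    (usum ξ J)
  intro n x
  simpa [Real.norm_eq_abs] using term_bound f ξ hξ hf hf' hb (J + 1 + n) x

lemma L2_key (f : ℝ → ℝ) (ξ : ℝ) (hξ : 0 ≤ ξ)
    (hf : Differentiable ℝ f) (hf' : Differentiable ℝ (deriv f))
    (hb : ∀ x ∈ Set.Icc (0:ℝ) 1, |deriv (deriv f) x| ≤ ξ) (J : ℕ) :
    L2norm (truncErr (haarCoeff (deriv f)) J) ≤ ξ / 12 * (1 / 4) ^ (J + 1) :=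
  L2norm_le_of_bound _ _ (by positivity) (trunc_continuous f ξ hξ hf hf' hb J)
    (fun t _ => trunc_pointwise f ξ hξ hf hf' hb J t)


end HaarAux

open HaarAux in
/-- Convergence of the Haar wavelet method for the IVP:
if `J > log₂(√(ξ₁/(3ε))) - 1` then
`‖E_M‖₂ = ‖E_{M1}‖₂ + ‖E_{M2}‖₂ < ε`. -/
theorem haar_ivp_convergence (y z : ℝ → ℝ) (ξ₁ ξ₂ : ℝ)
    (hξ : ξ₂ ≤ ξ₁) (hξ₁ : 0 < ξ₁)
    (hy : Differentiable ℝ y) (hy' : Differentiable ℝ (deriv y))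
    (hy'' : Differentiable ℝ (deriv (deriv y)))
    (hz : Differentiable ℝ z) (hz' : Differentiable ℝ (deriv z))
    (hz'' : Differentiable ℝ (deriv (deriv z)))
    (hby : ∀ t ∈ Set.Icc (0:ℝ) 1, |deriv (deriv (deriv y)) t| ≤ ξ₁)
    (hbz : ∀ t ∈ Set.Icc (0:ℝ) 1, |deriv (deriv (deriv z)) t| ≤ ξ₂)
    (J : ℕ) (ε : ℝ) (hε : 0 < ε)
    (hJ : (J : ℝ) > Real.logb 2 (Real.sqrt (ξ₁ / (3 * ε))) - 1) :
    L2norm (truncErr (haarCoeff (deriv (deriv y))) J) +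
      L2norm (truncErr (haarCoeff (deriv (deriv z))) J) < ε := by
  have hξ₂ : 0 ≤ ξ₂ := le_trans (abs_nonneg _) (hbz 0 (by norm_num))
  have h1 : L2norm (truncErr (haarCoeff (deriv (deriv y))) J) ≤ ξ₁ / 12 * (1 / 4) ^ (J + 1) :=
    L2_key (deriv y) ξ₁ hξ₁.le hy' hy'' hby J
  have h2 : L2norm (truncErr (haarCoeff (deriv (deriv z))) J) ≤ ξ₂ / 12 * (1 / 4) ^ (J + 1) :=
    L2_key (deriv z) ξ₂ hξ₂ hz' hz'' hbz J
  -- arithmetic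
  have hq : (0:ℝ) < ξ₁ / (3 * ε) := by positivity
  have hxpos : 0 < Real.sqrt (ξ₁ / (3 * ε)) := Real.sqrt_pos.2 hq
  have hlt : Real.sqrt (ξ₁ / (3 * ε)) < (2:ℝ) ^ ((J:ℝ) + 1) := by
    calc Real.sqrt (ξ₁ / (3 * ε)) = (2:ℝ) ^ Real.logb 2 (Real.sqrt (ξ₁ / (3 * ε))) :=
          (Real.rpow_logb (by norm_num) (by norm_num) hxpos).symm
      _ < (2:ℝ) ^ ((J:ℝ) + 1) := by
          apply Real.rpow_lt_rpow_left_iff (by norm_num : (1:ℝ) < 2) |>.2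
          linarith
  have hrw : (2:ℝ) ^ ((J:ℝ) + 1) = (2:ℝ) ^ (J + 1 : ℕ) := by
    rw [← Real.rpow_natCast 2 (J + 1)]
    push_cast
    ring_nf
  have hsq : ξ₁ / (3 * ε) < (4:ℝ) ^ (J + 1) := by
    have h4 : ((2:ℝ) ^ (J + 1 : ℕ)) ^ 2 = (4:ℝ) ^ (J + 1) := by
      rw [← pow_mul, show (J+1)*2 = (J+1) + (J+1) by ring, pow_add, ← mul_pow]
      norm_num
    calc ξ₁ / (3 * ε) = Real.sqrt (ξ₁ / (3 * ε)) ^ 2 := (Real.sq_sqrt hq.le).symm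
      _ < ((2:ℝ) ^ (J + 1 : ℕ)) ^ 2 := by
          rw [← hrw]
          exact pow_lt_pow_left₀ hlt hxpos.le (by norm_num)
      _ = (4:ℝ) ^ (J + 1) := h4
  have h4pos : (0:ℝ) < (4:ℝ) ^ (J + 1) := by positivity
  have hkey : ξ₁ < 3 * ε * 4 ^ (J + 1) := by
    rw [div_lt_iff₀ (by positivity)] at hsq
    linarith
  have hfin : ξ₁ / 12 * (1 / 4) ^ (J + 1) + ξ₂ / 12 * (1 / 4) ^ (J + 1) < ε := by
    have hp : (1 / 4 : ℝ) ^ (J + 1) = 1 / 4 ^ (J + 1) := by rw [div_pow]; norm_num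
    rw [hp]
    have hle : ξ₁ / 12 * (1 / 4 ^ (J + 1)) + ξ₂ / 12 * (1 / 4 ^ (J + 1))
        ≤ ξ₁ / 6 * (1 / 4 ^ (J + 1)) := by
      have : ξ₂ / 12 * (1 / 4 ^ (J + 1)) ≤ ξ₁ / 12 * (1 / 4 ^ (J + 1)) := by
        apply mul_le_mul_of_nonneg_right (by linarith) (by positivity)
      linarith
    have : ξ₁ / 6 * (1 / 4 ^ (J + 1)) < ε := by
      rw [div_mul_div_comm, mul_one, div_lt_iff₀ (by positivity)]
      nlinarith [mul_pos hε h4pos]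
    linarith
  linarith
end

section
/- The functions y(t) = √(1 + t²) and z(t) = 1/√(1 + t²) solve the coupled Lane–Emden initial value problem: for all t > 0, −(t y'(t))' = t·(−z(t)³(y(t)² + 1)) and −(t³ z'(t))' = t³·z(t)⁵(y(t)² + 3), together with the initial conditions y(0) = 1, y'(0) = 0, z(0) = 1, z'(0) = 0. -/
private lemma sq_pos' (t : ℝ) : (0:ℝ) < 1 + t ^ 2 := by positivity

private lemma sqrt_pos'' (t : ℝ) : 0 < Real.sqrt (1 + t ^ 2) :=
  Real.sqrt_pos.2 (sq_pos' t)

private lemma sqrt_sq'' (t : ℝ) : Real.sqrt (1 + t ^ 2) ^ 2 = 1 + t ^ 2 :=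
  Real.sq_sqrt (sq_pos' t).le

private lemma hsqrt (t : ℝ) :
    HasDerivAt (fun s : ℝ => Real.sqrt (1 + s ^ 2)) (t / Real.sqrt (1 + t ^ 2)) t := by
  have h : HasDerivAt (fun s : ℝ => 1 + s ^ 2) (2 * t) t := by
    simpa using (hasDerivAt_pow 2 t).const_add 1
  have := h.sqrt (ne_of_gt (sq_pos' t))
  convert this using 1
  field_simp

private lemma hderivY (t : ℝ) :
    deriv (fun s : ℝ => Real.sqrt (1 + s ^ 2)) t = t / Real.sqrt (1 + t ^ 2) :=
  (hsqrt t).deriv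

private lemma hderivZ (t : ℝ) :
    deriv (fun s : ℝ => 1 / Real.sqrt (1 + s ^ 2)) t
      = -(t / Real.sqrt (1 + t ^ 2)) / Real.sqrt (1 + t ^ 2) ^ 2 := by
  have h : HasDerivAt (fun s : ℝ => 1 / Real.sqrt (1 + s ^ 2))
      ((0 * Real.sqrt (1 + t ^ 2) - 1 * (t / Real.sqrt (1 + t ^ 2))) /
        Real.sqrt (1 + t ^ 2) ^ 2) t :=
    (hasDerivAt_const t (1:ℝ)).div (hsqrt t) (ne_of_gt (sqrt_pos'' t))
  rw [h.deriv]; ring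

/-- Example 2: `y(t) = √(1+t²)`, `z(t) = 1/√(1+t²)` solve the
coupled Lane–Emden IVP `-(t·y')' = t·(-z³(y²+1))`, `-(t³z')' = t³·z⁵(y²+3)`
with `y(0) = 1`, `y'(0) = 0`, `z(0) = 1`, `z'(0) = 0`. -/
theorem lane_emden_ivp_example2 :
    ∀ y z : ℝ → ℝ,
      (y = fun t => Real.sqrt (1 + t ^ 2)) →
      (z = fun t => 1 / Real.sqrt (1 + t ^ 2)) →
      (∀ t : ℝ, 0 < t →
        -deriv (fun s => s * deriv y s) t = t * (-(z t) ^ 3 * (y t ^ 2 + 1))) ∧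
      (∀ t : ℝ, 0 < t →
        -deriv (fun s => s ^ 3 * deriv z s) t = t ^ 3 * (z t ^ 5 * (y t ^ 2 + 3))) ∧
      y 0 = 1 ∧ deriv y 0 = 0 ∧ z 0 = 1 ∧ deriv z 0 = 0 := by
  intro y z hy hz
  subst hy hz
  refine ⟨?_, ?_, ?_, ?_, ?_, ?_⟩
  · intro t ht
    have heq : (fun s : ℝ => s * deriv (fun u : ℝ => Real.sqrt (1 + u ^ 2)) s)
        = fun s : ℝ => s ^ 2 / Real.sqrt (1 + s ^ 2) := by
      funext s
      rw [hderivY s]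
      field_simp
    rw [heq]
    have hnum : HasDerivAt (fun s : ℝ => s ^ 2) (2 * t) t := by
      simpa using hasDerivAt_pow 2 t
    have hD : HasDerivAt (fun s : ℝ => s ^ 2 / Real.sqrt (1 + s ^ 2))
        ((2 * t * Real.sqrt (1 + t ^ 2) - t ^ 2 * (t / Real.sqrt (1 + t ^ 2))) /
          Real.sqrt (1 + t ^ 2) ^ 2) t :=
      hnum.div (hsqrt t) (ne_of_gt (sqrt_pos'' t))
    rw [hD.deriv]
    have hr := sqrt_sq'' t
    have hr0 : Real.sqrt (1 + t ^ 2) ≠ 0 := ne_of_gt (sqrt_pos'' t)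
    field_simp
    linear_combination (-1) * hr
  · intro t ht
    have heq : (fun s : ℝ => s ^ 3 * deriv (fun u : ℝ => 1 / Real.sqrt (1 + u ^ 2)) s)
        = fun s : ℝ => -(s ^ 4) / Real.sqrt (1 + s ^ 2) ^ 3 := by
      funext s
      rw [hderivZ s]
      have h0 : Real.sqrt (1 + s ^ 2) ≠ 0 := ne_of_gt (sqrt_pos'' s)
      field_simp
    rw [heq]
    have hnum : HasDerivAt (fun s : ℝ => -(s ^ 4)) (-(4 * t ^ 3)) t := by
      simpa [Pi.neg_def] using (hasDerivAt_pow 4 t).neg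
    have hden : HasDerivAt (fun s : ℝ => Real.sqrt (1 + s ^ 2) ^ 3)
        (3 * Real.sqrt (1 + t ^ 2) ^ 2 * (t / Real.sqrt (1 + t ^ 2))) t := by
      simpa [Pi.pow_def] using (hsqrt t).pow 3
    have hr0 : Real.sqrt (1 + t ^ 2) ≠ 0 := ne_of_gt (sqrt_pos'' t)
    have hD : HasDerivAt (fun s : ℝ => -(s ^ 4) / Real.sqrt (1 + s ^ 2) ^ 3)
        ((-(4 * t ^ 3) * Real.sqrt (1 + t ^ 2) ^ 3 -
            -(t ^ 4) * (3 * Real.sqrt (1 + t ^ 2) ^ 2 * (t / Real.sqrt (1 + t ^ 2)))) /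
          (Real.sqrt (1 + t ^ 2) ^ 3) ^ 2) t :=
      hnum.div hden (pow_ne_zero 3 hr0)
    rw [hD.deriv]
    have hr := sqrt_sq'' t
    field_simp
    linear_combination 3 * hr
  · simp
  · rw [hderivY]; simp
  · simp
  · rw [hderivZ]; simp
end
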